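/- Let 𝐆 be the smallest collection of sets containing ℕ, closed under function spaces (if F, G ∈ 𝐆 then the set of total functions F → G is in 𝐆), and closed under countable dependent products (if Fₙ ∈ 𝐆 for all n ∈ ℕ, then ∏_{n∈ℕ} Fₙ ∈ 𝐆). Then 𝐆 is sparse: for all F, G ∈ 𝐆, if F ∩ G is inhabited then F = G. -/
import Mathlib


/-- The von Neumann numeral of `n`. -/
def natEmbed : ℕ → ZFSet
  | 0 => ∅
  | n + 1 => insert (natEmbed n) (natEmbed n)

/-- Finite types: the ground type `o` and arrow types `(σ)τ`. -/
inductive FType : Type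
  | o : FType
  | arrow : FType → FType → FType

/-- The set-theoretic extension of a finite type: `F_o = ω` and
`F_{(σ)τ}` is the set of all total (set) functions from `F_σ` to `F_τ`. -/
def Fext : FType → ZFSet
  | .o => ZFSet.omega
  | .arrow σ τ => ZFSet.funs (Fext σ) (Fext τ)

/-- The dependent product `∏_{n∈ℕ} Fₙ`: the set of functions `f` with domain `ω`
such that `f(n) ∈ Fₙ` for all `n`. -/
noncomputable def depProd (F : ℕ → ZFSet) : ZFSet :=
  ZFSet.sep
    (fun f => ∀ (n : ℕ) (y : ZFSet), ZFSet.pair (natEmbed n) y ∈ f → y ∈ F n)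
    (ZFSet.funs ZFSet.omega (ZFSet.sUnion (ZFSet.range F)))

/-- `𝐆`: the smallest collection of sets containing `ω`, closed under function
spaces and under countable dependent products. -/
inductive InG : ZFSet → Prop
  | omega : InG ZFSet.omega
  | funs {F G : ZFSet} : InG F → InG G → InG (ZFSet.funs F G)
  | prod (F : ℕ → ZFSet) : (∀ n, InG (F n)) → InG (depProd F)

lemma natEmbed_eq (n : ℕ) : natEmbed n = ZFSet.mk (PSet.ofNat n) := by
  induction n with
  | zero => rfl
  | succ n ih => simp [natEmbed, PSet.ofNat, ih, ← ZFSet.mk_eq]; rfl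

lemma mem_omega {x : ZFSet} : x ∈ ZFSet.omega ↔ ∃ n, x = natEmbed n := by
  induction x using Quotient.inductionOn with
  | h x =>
    constructor
    · rintro ⟨⟨n⟩, h⟩
      exact ⟨n, by rw [natEmbed_eq, ← ZFSet.mk_eq]; exact ZFSet.sound h⟩
    · rintro ⟨n, h⟩
      rw [h, natEmbed_eq]
      exact ⟨⟨n⟩, PSet.Equiv.rfl⟩

lemma natEmbed_mono {m n : ℕ} (h : m < n) : natEmbed m ∈ natEmbed n := by
  induction n with
  | zero => omega
  | succ n ih =>
    rcases Nat.lt_succ_iff_lt_or_eq.1 h with h | rfl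
    · exact ZFSet.mem_insert_iff.2 (Or.inr (ih h))
    · exact ZFSet.mem_insert_iff.2 (Or.inl rfl)

lemma natEmbed_injective : Function.Injective natEmbed := by
  intro m n h
  by_contra hne
  rcases Nat.lt_or_ge m n with hl | hg
  · exact ZFSet.mem_irrefl _ (h ▸ natEmbed_mono hl)
  · have := natEmbed_mono (show n < m by omega)
    rw [h] at this
    exact ZFSet.mem_irrefl _ this

lemma empty_mem_natEmbed_succ (n : ℕ) : (∅ : ZFSet) ∈ natEmbed (n + 1) :=
  natEmbed_mono (Nat.succ_pos n)

lemma isFunc_value {A B f x : ZFSet} (hf : ZFSet.IsFunc A B f) (hx : x ∈ A) :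
    ∃ y, ZFSet.pair x y ∈ f ∧ y ∈ B := by
  obtain ⟨y, hy, -⟩ := hf.2 x hx
  exact ⟨y, hy, (ZFSet.pair_mem_prod.1 (hf.1 hy)).2⟩

lemma isFunc_dom_eq {A B A' B' f : ZFSet} (hf : ZFSet.IsFunc A B f)
    (hf' : ZFSet.IsFunc A' B' f) : A = A' := by
  apply ZFSet.ext
  intro x
  constructor
  · intro hx
    obtain ⟨y, hy, -⟩ := isFunc_value hf hx
    exact (ZFSet.pair_mem_prod.1 (hf'.1 hy)).1
  · intro hx
    obtain ⟨y, hy, -⟩ := isFunc_value hf' hx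
    exact (ZFSet.pair_mem_prod.1 (hf.1 hy)).1

lemma omega_not_isFunc {A B z : ZFSet} (hz : z ∈ ZFSet.omega)
    (hf : ZFSet.IsFunc A B z) (hA : ∃ x, x ∈ A) : False := by
  obtain ⟨x, hx⟩ := hA
  obtain ⟨y, hy, -⟩ := isFunc_value hf hx
  obtain ⟨n, rfl⟩ := mem_omega.1 hz
  cases n with
  | zero => exact ZFSet.notMem_empty _ hy
  | succ n =>
    have h0 : (∅ : ZFSet) ∈ natEmbed (n + 1) := empty_mem_natEmbed_succ n
    have := hf.1 h0
    rw [ZFSet.mem_prod] at this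
    obtain ⟨a, -, b, -, hab⟩ := this
    have : ({a} : ZFSet) ∈ (∅ : ZFSet) := by
      rw [hab]; exact ZFSet.mem_insert_iff.2 (Or.inl rfl)
    exact ZFSet.notMem_empty _ this

lemma mem_depProd {F : ℕ → ZFSet} {f : ZFSet} :
    f ∈ depProd F ↔ ZFSet.IsFunc ZFSet.omega (ZFSet.sUnion (ZFSet.range F)) f ∧
      ∀ (n : ℕ) (y : ZFSet), ZFSet.pair (natEmbed n) y ∈ f → y ∈ F n := by
  rw [depProd, ZFSet.mem_sep, ZFSet.mem_funs]

lemma depProd_const (G : ZFSet) : depProd (fun _ => G) = ZFSet.funs ZFSet.omega G := by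
  have hr : ZFSet.sUnion (ZFSet.range (fun _ : ℕ => G)) = G := by
    have : ZFSet.range (fun _ : ℕ => G) = {G} := by
      ext x; simp [ZFSet.mem_range, eq_comm]
    rw [this, ZFSet.sUnion_singleton]
  apply ZFSet.ext
  intro f
  rw [mem_depProd, ZFSet.mem_funs, hr]
  constructor
  · exact fun h => h.1
  · intro h
    refine ⟨h, fun n y hy => ?_⟩
    exact (ZFSet.pair_mem_prod.1 (h.1 hy)).2

lemma InG_nonempty {F : ZFSet} (h : InG F) : ∃ x, x ∈ F := by
  induction h with
  | omega => exact ⟨∅, ZFSet.omega_zero⟩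
  | @funs A B hA hB ihA ihB =>
    obtain ⟨g, hg⟩ := ihB
    letI : ZFSet.Definable₁ (fun _ => g) := Classical.allZFSetDefinable _
    refine ⟨ZFSet.map (fun _ => g) A, ZFSet.mem_funs.2 (ZFSet.map_isFunc.2 fun z _ => hg)⟩
  | prod H hH ih =>
    choose g hg using ih
    classical
    set func : ZFSet → ZFSet :=
      fun x => if h : ∃ n, x = natEmbed n then g h.choose else ∅ with hfunc
    letI : ZFSet.Definable₁ func := Classical.allZFSetDefinable _
    have key : ∀ n : ℕ, func (natEmbed n) = g n := by
      intro n
      have hex : ∃ m, natEmbed n = natEmbed m := ⟨n, rfl⟩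
      have : hex.choose = n := (natEmbed_injective hex.choose_spec).symm
      simp only [hfunc, dif_pos hex]
      exact congrArg g this
    refine ⟨ZFSet.map func ZFSet.omega, mem_depProd.2 ⟨?_, ?_⟩⟩
    · refine ZFSet.map_isFunc.2 fun z hz => ?_
      obtain ⟨n, rfl⟩ := mem_omega.1 hz
      rw [key n]
      exact ZFSet.mem_sUnion.2 ⟨H n, ZFSet.mem_range.2 ⟨n, rfl⟩, hg n⟩
    · intro n y hy
      obtain ⟨z, hz, hzy⟩ := ZFSet.mem_map.1 hy
      obtain ⟨hz1, hz2⟩ := ZFSet.pair_injective hzy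
      rw [← hz2, hz1, key n]
      exact hg n

/-- `𝐆` is sparse: members of `𝐆` with inhabited intersection are equal. -/
theorem InG_sparse (F G : ZFSet) (hF : InG F) (hG : InG G)
    (h : ∃ z : ZFSet, z ∈ F ∧ z ∈ G) : F = G := by
  induction hF generalizing G with
  | omega =>
    cases hG with
    | omega => rfl
    | @funs A' B' hA' hB' =>
      obtain ⟨z, hz1, hz2⟩ := h
      exact (omega_not_isFunc hz1 (ZFSet.mem_funs.1 hz2) (InG_nonempty hA')).elim
    | prod H hH =>
      obtain ⟨z, hz1, hz2⟩ := h
      exact (omega_not_isFunc hz1 (mem_depProd.1 hz2).1 ⟨∅, ZFSet.omega_zero⟩).elim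
  | @funs A B hA hB ihA ihB =>
    cases hG with
    | omega =>
      obtain ⟨z, hz1, hz2⟩ := h
      exact (omega_not_isFunc hz2 (ZFSet.mem_funs.1 hz1) (InG_nonempty hA)).elim
    | @funs A' B' hA' hB' =>
      obtain ⟨z, hz1, hz2⟩ := h
      have fz := ZFSet.mem_funs.1 hz1
      have fz' := ZFSet.mem_funs.1 hz2
      have hAA : A = A' := isFunc_dom_eq fz fz'
      obtain ⟨x, hx⟩ := InG_nonempty hA
      obtain ⟨y, hy, hyB⟩ := isFunc_value fz hx
      have hyB' : y ∈ B' := (ZFSet.pair_mem_prod.1 (fz'.1 hy)).2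
      have hBB : B = B' := ihB B' hB' ⟨y, hyB, hyB'⟩
      rw [hAA, hBB]
    | prod H hH =>
      obtain ⟨z, hz1, hz2⟩ := h
      have fz := ZFSet.mem_funs.1 hz1
      obtain ⟨fz', cond⟩ := mem_depProd.1 hz2
      have hAw : A = ZFSet.omega := isFunc_dom_eq fz fz'
      have hBH : ∀ n, B = H n := by
        intro n
        have hx : natEmbed n ∈ A := by rw [hAw]; exact mem_omega.2 ⟨n, rfl⟩
        obtain ⟨y, hy, hyB⟩ := isFunc_value fz hx
        exact ihB (H n) (hH n) ⟨y, hyB, cond n y hy⟩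
      have : H = fun _ => B := funext fun n => (hBH n).symm
      rw [hAw, this, depProd_const]
  | prod H hH ih =>
    cases hG with
    | omega =>
      obtain ⟨z, hz1, hz2⟩ := h
      exact (omega_not_isFunc hz2 (mem_depProd.1 hz1).1 ⟨∅, ZFSet.omega_zero⟩).elim
    | @funs A' B' hA' hB' =>
      obtain ⟨z, hz1, hz2⟩ := h
      obtain ⟨fz, cond⟩ := mem_depProd.1 hz1
      have fz' := ZFSet.mem_funs.1 hz2
      have hAw : A' = ZFSet.omega := isFunc_dom_eq fz' fz
      have hHB : ∀ n, H n = B' := by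
        intro n
        have hx : natEmbed n ∈ ZFSet.omega := mem_omega.2 ⟨n, rfl⟩
        obtain ⟨y, hy, -⟩ := isFunc_value fz hx
        have hyB' : y ∈ B' := (ZFSet.pair_mem_prod.1 (fz'.1 hy)).2
        exact ih n B' hB' ⟨y, cond n y hy, hyB'⟩
      have : H = fun _ => B' := funext hHB
      rw [this, depProd_const, hAw]
    | prod H' hH' =>
      obtain ⟨z, hz1, hz2⟩ := h
      obtain ⟨fz, cond⟩ := mem_depProd.1 hz1
      obtain ⟨fz', cond'⟩ := mem_depProd.1 hz2
      have : H = H' := by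
        funext n
        have hx : natEmbed n ∈ ZFSet.omega := mem_omega.2 ⟨n, rfl⟩
        obtain ⟨y, hy, -⟩ := isFunc_value fz hx
        exact ih n (H' n) (hH' n) ⟨y, cond n y hy, cond' n y hy⟩
      rw [this]
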